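/- For any ideal 𝔞 of a commutative semiring S, 𝔞 is a z-ideal if and only if 𝔞 is z-radical, i.e., 𝔞 = ᶻ√𝔞. -/
import Mathlib


/-- An ideal `I` of a commutative semiring is a *z-ideal* if for every `x ∈ I`,
the intersection of all maximal ideals containing `x` is contained in `I`. -/
def IsZIdeal {S : Type*} [CommSemiring S] (I : Ideal S) : Prop :=
  ∀ x ∈ I, sInf {m : Ideal S | m.IsMaximal ∧ x ∈ m} ≤ I

/-- The *z-radical* of an ideal: the intersection of all prime z-ideals containing it. -/
def zRadical {S : Type*} [CommSemiring S] (a : Ideal S) : Ideal S :=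
  sInf {p : Ideal S | p.IsPrime ∧ IsZIdeal p ∧ a ≤ p}

/-- For a minimal prime `p` over `a` and `x ∈ p`, some `y * x ^ n` lies in `a` with `y ∉ p`. -/
lemma exists_mul_pow_mem_of_mem_minimalPrimes {S : Type*} [CommSemiring S] {a p : Ideal S}
    (hp : p ∈ a.minimalPrimes) {x : S} (hx : x ∈ p) :
    ∃ (n : ℕ) (y : S), y ∉ p ∧ y * x ^ n ∈ a := by
  by_contra hcon
  push_neg at hcon
  have hprime : p.IsPrime := hp.1.1
  have h1 : (1 : S) ∉ p := (Ideal.ne_top_iff_one p).mp hprime.ne_top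
  set M : Submonoid S :=
    { carrier := {z | ∃ y ∉ p, ∃ n : ℕ, y * x ^ n = z}
      one_mem' := ⟨1, h1, 0, by ring⟩
      mul_mem' := by
        rintro z w ⟨y₁, hy₁, n₁, rfl⟩ ⟨y₂, hy₂, n₂, rfl⟩
        exact ⟨y₁ * y₂, fun h => (hprime.mem_or_mem h).elim hy₁ hy₂, n₁ + n₂, by ring⟩ } with hM
  have hdisj : Disjoint (a : Set S) (M : Set S) := by
    rw [Set.disjoint_left]
    rintro z hz ⟨y, hy, n, rfl⟩
    exact hcon n y hy hz
  obtain ⟨q, hq, haq, hqd⟩ := Ideal.exists_le_prime_disjoint a M hdisj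
  have hqp : q ≤ p := by
    intro z hz
    by_contra hzp
    exact Set.disjoint_left.mp hqd hz ⟨z, hzp, 0, by ring⟩
  have hpq : p ≤ q := hp.2 ⟨hq, haq⟩ hqp
  exact Set.disjoint_left.mp hqd (hpq hx) ⟨1, h1, 1, by ring⟩

/-- A minimal prime over a z-ideal is a z-ideal. -/
lemma isZIdeal_of_mem_minimalPrimes {S : Type*} [CommSemiring S] {a p : Ideal S}
    (ha : IsZIdeal a) (hp : p ∈ a.minimalPrimes) : IsZIdeal p := by
  have hprime : p.IsPrime := hp.1.1
  intro x hx z hz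
  rw [Ideal.mem_sInf] at hz
  obtain ⟨n, y, hy, hxy⟩ := exists_mul_pow_mem_of_mem_minimalPrimes hp hx
  have key : z ^ n * y ∈ a := by
    refine ha _ hxy ?_
    rw [Ideal.mem_sInf]
    rintro m ⟨hmax, hmem⟩
    have hmp : m.IsPrime := hmax.isPrime
    rcases hmp.mem_or_mem hmem with hym | hxm
    · exact m.mul_mem_left _ hym
    · have hxm' : x ∈ m := hmp.mem_of_pow_mem n hxm
      have hzm : z ∈ m := hz ⟨hmax, hxm'⟩
      rcases Nat.eq_zero_or_pos n with rfl | hn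
      · exact absurd ((pow_zero x) ▸ hxm) ((Ideal.ne_top_iff_one m).mp hmp.ne_top)
      · exact m.mul_mem_right _ (Ideal.pow_mem_of_mem m hzm n hn)
  have : z ^ n ∈ p := by
    rcases hprime.mem_or_mem (hp.1.2 key) with h | h
    · exact h
    · exact absurd h hy
  exact hprime.mem_of_pow_mem n this

/-- A z-ideal is radical. -/
lemma radical_eq_of_isZIdeal {S : Type*} [CommSemiring S] {a : Ideal S}
    (ha : IsZIdeal a) : a.radical = a := by
  refine le_antisymm ?_ Ideal.le_radical
  intro x hx
  obtain ⟨n, hn⟩ := hx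
  refine ha _ hn ?_
  rw [Ideal.mem_sInf]
  rintro m ⟨hmax, hmem⟩
  exact hmax.isPrime.mem_of_pow_mem n hmem

theorem isZIdeal_iff_zRadical {S : Type*} [CommSemiring S] (a : Ideal S) :
    IsZIdeal a ↔ zRadical a = a := by
  constructor
  · intro ha
    refine le_antisymm ?_ (le_sInf fun p hp => hp.2.2)
    have hrad : a.radical = a := radical_eq_of_isZIdeal ha
    calc zRadical a ≤ sInf { J : Ideal S | a ≤ J ∧ J.IsPrime } := by
          refine le_sInf ?_
          rintro J ⟨haJ, hJ⟩
          obtain ⟨q, hq, hqJ⟩ := Ideal.exists_minimalPrimes_le (J := J) haJ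
          exact le_trans (sInf_le ⟨hq.1.1, isZIdeal_of_mem_minimalPrimes ha hq, hq.1.2⟩) hqJ
      _ = a.radical := (Ideal.radical_eq_sInf a).symm
      _ = a := hrad
  · intro h
    intro x hx z hz
    rw [← h, zRadical, Ideal.mem_sInf]
    rintro p ⟨hp, hzp, hap⟩
    have hxp : x ∈ p := hap (h ▸ hx)
    exact hzp x hxp hz
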